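/- Let w : ℝ^d → ℝ^d be a C¹ vector field, h(x) = x φ(|x|) with φ as above (φ ≥ 0, φ' ≤ 0 a.e.). Then ∑_{i,j,k} ∫_{ℝ^d} ∂_j w^k(x) ∂_j h^i(x) ∂_i w^k(x) dx ≥ ∫_{ℝ^d} (φ(|x|) + |x| φ'(|x|)) |∇w(x)|² dx, provided w has enough decay for the integrals to converge. -/

import Mathlib

open MeasureTheory

/-- Spatial partial derivative `∂_l f` of a scalar function on `ℝ^d`. -/
noncomputable def pd {d : ℕ} (l : Fin d) (f : EuclideanSpace ℝ (Fin d) → ℝ)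
    (x : EuclideanSpace ℝ (Fin d)) : ℝ :=
  fderiv ℝ f x (EuclideanSpace.single l 1)

/-- The radial cutoff `φ(r) = b₀` for `r ≤ R/λ`, `φ(r) = b₀R/(λr)` for `r > R/λ`. -/
noncomputable def phi (b₀ R lam r : ℝ) : ℝ :=
  if r ≤ R / lam then b₀ else b₀ * R / (lam * r)

/-- The radial vector field `h(x) = x φ(|x|)`. -/
noncomputable def hvec (d : ℕ) (b₀ R lam : ℝ) (x : EuclideanSpace ℝ (Fin d)) :
    EuclideanSpace ℝ (Fin d) :=
  phi b₀ R lam ‖x‖ • x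

section helpers

lemma sum_alg (d : ℕ) (a : Fin d → Fin d → ℝ) (v : Fin d → ℝ) (p q : ℝ) :
    ∑ i, ∑ j, ∑ k, a j k * (p * (if i = j then 1 else 0) + q * (v j * v i)) * a i k
      = p * (∑ j, ∑ k, (a j k)^2) + q * ∑ k, (∑ j, v j * a j k)^2 := by
  have h1 : ∑ i, ∑ j, ∑ k, a j k * (p * (if i = j then 1 else 0)) * a i k
      = p * (∑ j, ∑ k, (a j k)^2) := by
    have e1 : ∀ i : Fin d, ∑ j, ∑ k, a j k * (p * (if i = j then 1 else 0)) * a i k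
        = ∑ j, if i = j then (∑ k, p * (a i k)^2) else 0 := by
      intro i
      refine Finset.sum_congr rfl fun j _ => ?_
      by_cases h : i = j
      · subst h
        simp only [if_pos rfl]
        exact Finset.sum_congr rfl fun k _ => by rw [if_pos trivial]; ring
      · simp [h]
    simp only [e1, Finset.sum_ite_eq, Finset.mem_univ, if_true, ← Finset.mul_sum]
  have h2 : ∑ i, ∑ j, ∑ k, a j k * (q * (v j * v i)) * a i k
      = q * ∑ k, (∑ j, v j * a j k)^2 := by
    have key : ∀ k : Fin d, ∑ i, ∑ j, a j k * (q * (v j * v i)) * a i k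
        = q * (∑ j, v j * a j k)^2 := by
      intro k
      rw [sq, Finset.sum_mul_sum, Finset.mul_sum]
      refine Finset.sum_congr rfl fun i _ => ?_
      rw [Finset.mul_sum]
      exact Finset.sum_congr rfl fun j _ => by ring
    calc ∑ i, ∑ j, ∑ k, a j k * (q * (v j * v i)) * a i k
        = ∑ i, ∑ k, ∑ j, a j k * (q * (v j * v i)) * a i k :=
          Finset.sum_congr rfl fun i _ => Finset.sum_comm
      _ = ∑ k, ∑ i, ∑ j, a j k * (q * (v j * v i)) * a i k := Finset.sum_comm
      _ = ∑ k, q * (∑ j, v j * a j k)^2 := Finset.sum_congr rfl fun k _ => key k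
      _ = q * ∑ k, (∑ j, v j * a j k)^2 := (Finset.mul_sum _ _ _).symm
  calc ∑ i, ∑ j, ∑ k, a j k * (p * (if i = j then 1 else 0) + q * (v j * v i)) * a i k
      = ∑ i, ∑ j, ∑ k, (a j k * (p * (if i = j then 1 else 0)) * a i k
          + a j k * (q * (v j * v i)) * a i k) :=
        Finset.sum_congr rfl fun i _ => Finset.sum_congr rfl fun j _ =>
          Finset.sum_congr rfl fun k _ => by ring
    _ = _ := by simp only [Finset.sum_add_distrib, h1, h2]

lemma hasFDerivAt_norm' {E : Type*} [NormedAddCommGroup E] [InnerProductSpace ℝ E]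
    {x : E} (hx : x ≠ 0) :
    HasFDerivAt (fun y : E => ‖y‖) (‖x‖⁻¹ • innerSL ℝ x) x := by
  have hn : ‖x‖ ≠ 0 := norm_ne_zero_iff.mpr hx
  have h1 : HasFDerivAt (fun y : E => ‖y‖ ^ 2) ((2:ℕ) • innerSL ℝ x) x :=
    (hasStrictFDerivAt_norm_sq x).hasFDerivAt
  have h2 : HasFDerivAt (fun y : E => Real.sqrt (‖y‖ ^ 2))
      ((1 / (2 * Real.sqrt (‖x‖ ^ 2))) • ((2:ℕ) • innerSL ℝ x)) x :=
    h1.sqrt (by positivity)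
  have heq : (fun y : E => Real.sqrt (‖y‖ ^ 2)) = fun y : E => ‖y‖ := by
    funext y; rw [Real.sqrt_sq (norm_nonneg _)]
  rw [heq, Real.sqrt_sq (norm_nonneg _)] at h2
  convert h2 using 1
  ext e
  simp only [ContinuousLinearMap.smul_apply, ContinuousLinearMap.coe_smul',
    Pi.smul_apply, Nat.cast_smul_eq_nsmul, smul_eq_mul, nsmul_eq_mul, Nat.cast_ofNat]
  field_simp

lemma deriv_phi_lt {b₀ R lam r : ℝ} (h : r < R / lam) :
    deriv (phi b₀ R lam) r = 0 := by
  have hev : phi b₀ R lam =ᶠ[nhds r] fun _ => b₀ := by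
    filter_upwards [Iio_mem_nhds h] with s hs
    exact if_pos (le_of_lt hs)
  rw [hev.deriv_eq, deriv_const]

lemma deriv_phi_gt {b₀ R lam r : ℝ} (hl : 0 < lam) (hR : 0 < R) (h : R / lam < r) :
    deriv (phi b₀ R lam) r = (b₀ * R / lam) * (-(r^2)⁻¹) := by
  have hr : r ≠ 0 := (lt_trans (div_pos hR hl) h).ne'
  have hev : phi b₀ R lam =ᶠ[nhds r] fun s => (b₀ * R / lam) * s⁻¹ := by
    filter_upwards [Ioi_mem_nhds h] with s hs
    have : ¬ s ≤ R / lam := not_le.mpr hs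
    simp only [phi, if_neg this]
    rw [← div_div, div_eq_mul_inv]
  rw [hev.deriv_eq]
  have := ((hasDerivAt_inv hr).const_mul (b₀ * R / lam)).deriv
  simpa using this

variable {d : ℕ}

lemma fderiv_hvec_lt {b₀ R lam : ℝ} {x : EuclideanSpace ℝ (Fin d)} (h : ‖x‖ < R / lam) :
    fderiv ℝ (hvec d b₀ R lam) x
      = b₀ • ContinuousLinearMap.id ℝ (EuclideanSpace ℝ (Fin d)) := by
  have hmem : Metric.ball (0 : EuclideanSpace ℝ (Fin d)) (R / lam) ∈ nhds x :=
    Metric.isOpen_ball.mem_nhds (by simpa [Metric.mem_ball, dist_zero_right] using h)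
  have hev : hvec d b₀ R lam =ᶠ[nhds x] fun y => b₀ • y := by
    filter_upwards [hmem] with y hy
    have hy' : ‖y‖ < R / lam := by simpa [Metric.mem_ball, dist_zero_right] using hy
    simp [hvec, phi, if_pos hy'.le]
  have hD : HasFDerivAt (fun y : EuclideanSpace ℝ (Fin d) => b₀ • y)
      (b₀ • ContinuousLinearMap.id ℝ (EuclideanSpace ℝ (Fin d))) x :=
    (hasFDerivAt_id x).const_smul b₀
  exact (hD.congr_of_eventuallyEq hev).fderiv

lemma fderiv_hvec_gt {b₀ R lam : ℝ} (hR : 0 < R) (hl : 0 < lam)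
    {x : EuclideanSpace ℝ (Fin d)} (h : R / lam < ‖x‖) (j i : Fin d) :
    fderiv ℝ (hvec d b₀ R lam) x (EuclideanSpace.single j 1) i
      = (b₀ * R / lam * ‖x‖⁻¹) * (if i = j then 1 else 0)
        + (b₀ * R / lam * (-(‖x‖^2)⁻¹ * ‖x‖⁻¹)) * (x j * x i) := by
  have hx0 : (0:ℝ) < ‖x‖ := lt_trans (div_pos hR hl) h
  have hx : x ≠ 0 := by intro h0; rw [h0, norm_zero] at hx0; exact lt_irrefl _ hx0
  have hn : ‖x‖ ≠ 0 := hx0.ne'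
  have hinv : HasFDerivAt (fun y : EuclideanSpace ℝ (Fin d) => ‖y‖⁻¹)
      (-(‖x‖^2)⁻¹ • (‖x‖⁻¹ • innerSL ℝ x)) x :=
    (hasDerivAt_inv hn).comp_hasFDerivAt x (hasFDerivAt_norm' hx)
  have hsm : HasFDerivAt (fun y : EuclideanSpace ℝ (Fin d) => ‖y‖⁻¹ • y)
      (‖x‖⁻¹ • ContinuousLinearMap.id ℝ (EuclideanSpace ℝ (Fin d))
        + (-(‖x‖^2)⁻¹ • (‖x‖⁻¹ • innerSL ℝ x)).smulRight x) x :=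
    hinv.smul (hasFDerivAt_id x)
  have hD : HasFDerivAt (hvec d b₀ R lam)
      ((b₀ * R / lam) • (‖x‖⁻¹ • ContinuousLinearMap.id ℝ (EuclideanSpace ℝ (Fin d))
        + (-(‖x‖^2)⁻¹ • (‖x‖⁻¹ • innerSL ℝ x)).smulRight x)) x := by
    refine (hsm.const_smul (b₀ * R / lam)).congr_of_eventuallyEq ?_
    have hmem : {y : EuclideanSpace ℝ (Fin d) | R / lam < ‖y‖} ∈ nhds x :=
      (isOpen_lt continuous_const continuous_norm).mem_nhds h
    filter_upwards [hmem] with y hy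
    have hy' : ¬ ‖y‖ ≤ R / lam := not_le.mpr hy
    have hyn : ‖y‖ ≠ 0 := (lt_trans (div_pos hR hl) hy).ne'
    simp only [hvec, phi, if_neg hy', smul_smul]
    rw [Pi.smul_apply, smul_smul]
    congr 1
    field_simp
  rw [hD.fderiv]
  have hone : ((EuclideanSpace.single j 1 : EuclideanSpace ℝ (Fin d)) : Fin d → ℝ) i
      = if i = j then 1 else 0 := EuclideanSpace.single_apply j 1 i
  have hinner : (inner ℝ x (EuclideanSpace.single j (1:ℝ)) : ℝ) = x j := by
    rw [EuclideanSpace.inner_single_right]; simp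
  simp only [ContinuousLinearMap.smul_apply, ContinuousLinearMap.add_apply,
    ContinuousLinearMap.coe_smul', Pi.smul_apply, ContinuousLinearMap.coe_id', id_eq,
    ContinuousLinearMap.smulRight_apply, ContinuousLinearMap.smul_apply, innerSL_apply_apply,
    hinner, smul_eq_mul, PiLp.smul_apply, PiLp.add_apply]
  rw [hone]
  ring

end helpers

/-- `∑_{i,j,k} ∫ ∂_j w^k ∂_j h^i ∂_i w^k dx ≥ ∫ (φ(|x|)+|x|φ'(|x|)) |∇w|² dx`. -/
theorem stmt10 (d : ℕ) (hd : 1 ≤ d) (b₀ R lam : ℝ) (hb : 0 < b₀) (hR : 0 < R)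
    (hl : 0 < lam)
    (w : EuclideanSpace ℝ (Fin d) → EuclideanSpace ℝ (Fin d))
    (hw : ContDiff ℝ 1 w)
    (hint1 : Integrable (fun x => ∑ i, ∑ j, ∑ k,
      pd j (fun z => w z k) x *
        fderiv ℝ (hvec d b₀ R lam) x (EuclideanSpace.single j 1) i *
        pd i (fun z => w z k) x))
    (hint2 : Integrable (fun x =>
      (phi b₀ R lam ‖x‖ + ‖x‖ * deriv (phi b₀ R lam) ‖x‖) *
        ∑ j, ∑ k, (pd j (fun z => w z k) x) ^ 2)) :
    ∫ x, (phi b₀ R lam ‖x‖ + ‖x‖ * deriv (phi b₀ R lam) ‖x‖) *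
        (∑ j, ∑ k, (pd j (fun z => w z k) x) ^ 2)
      ≤ ∫ x, ∑ i, ∑ j, ∑ k,
          pd j (fun z => w z k) x *
            fderiv ℝ (hvec d b₀ R lam) x (EuclideanSpace.single j 1) i *
            pd i (fun z => w z k) x := by
  refine integral_mono_ae hint2 hint1 ?_
  have hsph : ∀ᵐ x : EuclideanSpace ℝ (Fin d), ‖x‖ ≠ R / lam := by
    have h0 : volume (Metric.sphere (0 : EuclideanSpace ℝ (Fin d)) (R / lam)) = 0 :=
      Measure.addHaar_sphere_of_ne_zero _ _ (div_pos hR hl).ne'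
    refine (ae_iff).mpr ?_
    convert h0 using 2
    ext x
    simp [Metric.mem_sphere, dist_zero_right]
  filter_upwards [hsph] with x hx
  set a : Fin d → Fin d → ℝ := fun j k => pd j (fun z => w z k) x with ha
  have hSnn : 0 ≤ ∑ j, ∑ k, (a j k)^2 :=
    Finset.sum_nonneg fun j _ => Finset.sum_nonneg fun k _ => sq_nonneg _
  rcases lt_or_gt_of_ne hx with h | h
  · -- inside the ball
    have hphi : phi b₀ R lam ‖x‖ = b₀ := if_pos h.le
    have hder : deriv (phi b₀ R lam) ‖x‖ = 0 := deriv_phi_lt h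
    have hterm : ∀ j i : Fin d,
        fderiv ℝ (hvec d b₀ R lam) x (EuclideanSpace.single j 1) i
          = b₀ * (if i = j then 1 else 0) + 0 * (x j * x i) := by
      intro j i
      rw [fderiv_hvec_lt h]
      simp [EuclideanSpace.single_apply]
    have hsum : ∑ i, ∑ j, ∑ k,
        a j k * fderiv ℝ (hvec d b₀ R lam) x (EuclideanSpace.single j 1) i * a i k
          = b₀ * (∑ j, ∑ k, (a j k)^2) + 0 * ∑ k, (∑ j, x j * a j k)^2 := by
      rw [← sum_alg d a (fun i => x i) b₀ 0]
      exact Finset.sum_congr rfl fun i _ => Finset.sum_congr rfl fun j _ =>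
        Finset.sum_congr rfl fun k _ => by rw [hterm j i]
    calc (phi b₀ R lam ‖x‖ + ‖x‖ * deriv (phi b₀ R lam) ‖x‖) * (∑ j, ∑ k, (a j k)^2)
        = b₀ * (∑ j, ∑ k, (a j k)^2) := by rw [hphi, hder]; ring
      _ ≤ b₀ * (∑ j, ∑ k, (a j k)^2) + 0 * ∑ k, (∑ j, x j * a j k)^2 := by simp
      _ = _ := hsum.symm
  · -- outside the ball
    have hx0 : (0:ℝ) < ‖x‖ := lt_trans (div_pos hR hl) h
    have hn : ‖x‖ ≠ 0 := hx0.ne'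
    have hphi : phi b₀ R lam ‖x‖ = b₀ * R / (lam * ‖x‖) := if_neg (not_le.mpr h)
    have hder : deriv (phi b₀ R lam) ‖x‖ = (b₀ * R / lam) * (-(‖x‖^2)⁻¹) :=
      deriv_phi_gt hl hR h
    have hzero : phi b₀ R lam ‖x‖ + ‖x‖ * deriv (phi b₀ R lam) ‖x‖ = 0 := by
      rw [hphi, hder]
      field_simp
      ring
    set p : ℝ := b₀ * R / lam * ‖x‖⁻¹ with hp
    set q : ℝ := b₀ * R / lam * (-(‖x‖^2)⁻¹ * ‖x‖⁻¹) with hq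
    have hsum : ∑ i, ∑ j, ∑ k,
        a j k * fderiv ℝ (hvec d b₀ R lam) x (EuclideanSpace.single j 1) i * a i k
          = p * (∑ j, ∑ k, (a j k)^2) + q * ∑ k, (∑ j, x j * a j k)^2 := by
      rw [← sum_alg d a (fun i => x i) p q]
      exact Finset.sum_congr rfl fun i _ => Finset.sum_congr rfl fun j _ =>
        Finset.sum_congr rfl fun k _ => by rw [fderiv_hvec_gt hR hl h j i]
    -- Cauchy–Schwarz
    have hCS : ∑ k, (∑ j, x j * a j k)^2 ≤ ‖x‖^2 * (∑ j, ∑ k, (a j k)^2) := by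
      have hx2 : ∑ j, (x j)^2 = ‖x‖^2 := by
        rw [EuclideanSpace.norm_eq, Real.sq_sqrt (by positivity)]
        exact Finset.sum_congr rfl fun j _ => by rw [Real.norm_eq_abs, sq_abs]
      calc ∑ k, (∑ j, x j * a j k)^2
          ≤ ∑ k, (∑ j, (x j)^2) * (∑ j, (a j k)^2) := by
            refine Finset.sum_le_sum fun k _ => ?_
            exact Finset.sum_mul_sq_le_sq_mul_sq Finset.univ _ _
        _ = ‖x‖^2 * (∑ k, ∑ j, (a j k)^2) := by
            rw [hx2, Finset.mul_sum]
        _ = ‖x‖^2 * (∑ j, ∑ k, (a j k)^2) := by rw [Finset.sum_comm]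
    have hqneg : q ≤ 0 := by
      have hq' : q = -(b₀ * R / lam * ((‖x‖^2)⁻¹ * ‖x‖⁻¹)) := by rw [hq]; ring
      rw [hq']
      exact neg_nonpos.mpr (by positivity)
    have hpq : p + q * ‖x‖^2 = 0 := by
      rw [hp, hq]
      field_simp
      ring
    have h1 : q * (‖x‖^2 * (∑ j, ∑ k, (a j k)^2)) ≤ q * ∑ k, (∑ j, x j * a j k)^2 :=
      mul_le_mul_of_nonpos_left hCS hqneg
    have goal0 : 0 ≤ p * (∑ j, ∑ k, (a j k)^2) + q * ∑ k, (∑ j, x j * a j k)^2 := by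
      have : p * (∑ j, ∑ k, (a j k)^2) + q * (‖x‖^2 * (∑ j, ∑ k, (a j k)^2))
          = (p + q * ‖x‖^2) * (∑ j, ∑ k, (a j k)^2) := by ring
      nlinarith [hSnn]
    rw [hzero, zero_mul, hsum]
    exact goal0
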